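/- arXiv:2009.08035 — 3 statements merged into one kernel-verified Lean document; each statement's English description precedes it below -/
import Mathlib

section
/- For positive integers m, n, d with m ≤ n−1, and an integer r with d·m ≡ −r (mod n), for every k with 0 ≤ k ≤ m and an indeterminate a, the congruence (a·q^r; q^d)_{m−k} / (q^d/a; q^d)_{m−k} ≡ (−a)^{m−2k} · (a·q^r; q^d)_k / (q^d/a; q^d)_k · q^{m(dm−d+2r)/2 + (d−r)k} holds modulo the n-th cyclotomic polynomial Φ_n(q) (as an identity of rational functions in a and q, where the difference is a rational function whose numerator is divisible by Φ_n(q)). -/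
open Finset

noncomputable section

/-- Polynomial ring in the variables `q, a, b, c` (indices `0,1,2,3`). -/
abbrev R : Type := MvPolynomial (Fin 4) ℚ

/-- Field of rational functions in `q, a, b, c`. -/
abbrev K : Type := FractionRing R

def qv : K := algebraMap R K (MvPolynomial.X 0)
def av : K := algebraMap R K (MvPolynomial.X 1)
def bv : K := algebraMap R K (MvPolynomial.X 2)
def cv : K := algebraMap R K (MvPolynomial.X 3)

/-- The q-shifted factorial `(x; Q)_k = (1-x)(1-xQ)⋯(1-xQ^{k-1})`. -/
def poch (x Q : K) (k : ℕ) : K := ∏ i ∈ Finset.range k, (1 - x * Q ^ i)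

/-- The q-integer `[m] = (1-q^m)/(1-q)` (allowing integer `m`). -/
def qint (m : ℤ) : K := (1 - qv ^ m) / (1 - qv)

/-- The n-th cyclotomic polynomial, as a polynomial in the variable `q`. -/
def Phi (n : ℕ) : R :=
  Polynomial.eval₂ MvPolynomial.C (MvPolynomial.X 0) (Polynomial.cyclotomic n ℚ)

/-- `[n] = 1 + q + ⋯ + q^{n-1}` as a polynomial in `q`. -/
def qintR (n : ℕ) : R := ∑ i ∈ Finset.range n, (MvPolynomial.X 0 : R) ^ i

/-- `x ≡ 0 (mod M)` as rational functions: `x = M·f/g` where `g` shares no prime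
factor with `M` (i.e. the numerator of `x` in lowest terms is divisible by `M`). -/
def modCong (M : R) (x : K) : Prop :=
  ∃ f g : R, g ≠ 0 ∧ (∀ p : R, Prime p → p ∣ M → ¬ p ∣ g) ∧
    x * algebraMap R K g = algebraMap R K (M * f)

namespace Aux

/-- the embedding `ℚ[X] → R`, `X ↦ q`. -/
def ι : Polynomial ℚ →ₐ[ℚ] R := Polynomial.aeval (MvPolynomial.X 0 : R)

lemma Phi_eq (n : ℕ) : Phi n = ι (Polynomial.cyclotomic n ℚ) := by
  rw [Phi, ι, Polynomial.aeval_def, MvPolynomial.algebraMap_eq]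

/-- evaluation `R → ℚ[X]` with `q ↦ X`, `a ↦ v`, others `↦ 1`. -/
def ev (v : Polynomial ℚ) : R →ₐ[ℚ] Polynomial ℚ :=
  MvPolynomial.aeval (fun i => if i = 0 then Polynomial.X else if i = 1 then v else 1)

lemma ev_iota (v : Polynomial ℚ) (p : Polynomial ℚ) : ev v (ι p) = p := by
  rw [ι, ← Polynomial.aeval_algHom_apply]
  simp [ev]

lemma prime_iota {π : Polynomial ℚ} (hπ : Irreducible π) : Prime (ι π) := by
  have hπp : Prime π := hπ.prime
  let e1 := MvPolynomial.renameEquiv ℚ (_root_.finSuccEquiv 3)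
  let e2 := MvPolynomial.optionEquivRight ℚ (Fin 3)
  have key : e2 (e1 (ι π)) = MvPolynomial.C π := by
    have h1 : e1 (ι π) = Polynomial.aeval (MvPolynomial.X none) π := by
      rw [ι, ← Polynomial.aeval_algHom_apply]
      congr 1
      simp [e1]
    rw [h1, ← Polynomial.aeval_algHom_apply]
    have h2 : e2 (MvPolynomial.X none) = MvPolynomial.C Polynomial.X :=
      MvPolynomial.optionEquivRight_X_none ℚ (Fin 3)
    rw [h2]
    -- aeval (C X) π = C π
    have h3 := Polynomial.hom_eval₂ π (Polynomial.C)
      (MvPolynomial.C : Polynomial ℚ →+* MvPolynomial (Fin 3) (Polynomial ℚ)) Polynomial.X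
    rw [Polynomial.aeval_def]
    rw [show (algebraMap ℚ (MvPolynomial (Fin 3) (Polynomial ℚ))) =
      (MvPolynomial.C : Polynomial ℚ →+* MvPolynomial (Fin 3) (Polynomial ℚ)).comp Polynomial.C
      from Subsingleton.elim _ _]
    rw [← h3, Polynomial.eval₂_C_X]
  have hCπ : Prime (MvPolynomial.C π : MvPolynomial (Fin 3) (Polynomial ℚ)) :=
    (MvPolynomial.prime_C_iff (Fin 3)).mpr hπp
  rw [← key] at hCπ
  have h4 := (MulEquiv.prime_iff e2.toMulEquiv (p := e1 (ι π))).mp hCπ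
  exact (MulEquiv.prime_iff e1.toMulEquiv).mp h4

lemma cyclotomic_coeff_zero_ne (n : ℕ) (hn : 0 < n) :
    (Polynomial.cyclotomic n ℚ).coeff 0 ≠ 0 := by
  rcases eq_or_lt_of_le (show 1 ≤ n from hn) with h | h
  · rw [← h, Polynomial.cyclotomic_one]
    norm_num
  · rw [Polynomial.cyclotomic_coeff_zero ℚ h]
    norm_num

/-- every prime factor of `Phi n` is (up to a unit) `ι π` for an irreducible factor of
the cyclotomic polynomial. -/
lemma exists_factor {n : ℕ} (hn : 0 < n) {p : R} (hp : Prime p) (hdvd : p ∣ Phi n) :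
    ∃ π : Polynomial ℚ, Irreducible π ∧ π ∣ Polynomial.cyclotomic n ℚ ∧ ι π ∣ p := by
  classical
  set c := Polynomial.cyclotomic n ℚ with hc
  have hc0 : c ≠ 0 := Polynomial.cyclotomic_ne_zero n ℚ
  obtain ⟨u, hu⟩ := (UniqueFactorizationMonoid.factors_prod hc0)
  rw [Phi_eq, ← hc, ← hu, map_mul] at hdvd
  rcases hp.2.2 _ _ hdvd with h | h
  swap
  · exact absurd (isUnit_of_dvd_unit h ((u.isUnit).map ι)) hp.2.1
  · rw [map_multiset_prod] at h
    obtain ⟨b, hb, hpb⟩ := hp.exists_mem_multiset_dvd h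
    obtain ⟨π, hπm, rfl⟩ := Multiset.mem_map.mp hb
    have hirr : Irreducible π := UniqueFactorizationMonoid.irreducible_of_factor π hπm
    refine ⟨π, hirr, UniqueFactorizationMonoid.dvd_of_mem_factors hπm, ?_⟩
    exact ((hp.associated_of_dvd (prime_iota hirr) hpb).symm).dvd

/-- a denominator sharing no prime factor with `Phi n`. -/
def goodDen (n : ℕ) (g : R) : Prop := ∀ p : R, Prime p → p ∣ Phi n → ¬ p ∣ g

lemma goodDen_of_ev {n : ℕ} (hn : 0 < n) (g : R) (v : Polynomial ℚ)
    (hev : IsUnit (ev v g)) : goodDen n g := by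
  intro p hp hdvd hpg
  obtain ⟨π, hirr, hπc, hπp⟩ := exists_factor hn hp hdvd
  have h1 : ι π ∣ g := hπp.trans hpg
  have h2 : π ∣ ev v g := by
    have := (ev v).toRingHom.map_dvd h1
    change ev v (ι π) ∣ ev v g at this
    rwa [ev_iota v π] at this
  exact hirr.not_isUnit (isUnit_of_dvd_unit h2 hev)

lemma goodDen_one (n : ℕ) : goodDen n 1 := fun p hp _ hpg => hp.2.1 (isUnit_of_dvd_one hpg)

lemma goodDen_mul {n : ℕ} {g1 g2 : R} (h1 : goodDen n g1) (h2 : goodDen n g2) :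
    goodDen n (g1 * g2) := by
  intro p hp hdvd hpg
  rcases hp.2.2 _ _ hpg with h | h
  · exact h1 p hp hdvd h
  · exact h2 p hp hdvd h

lemma goodDen_pow {n : ℕ} {g : R} (h : goodDen n g) (N : ℕ) : goodDen n (g ^ N) := by
  induction N with
  | zero => simpa using goodDen_one n
  | succ N ih => rw [pow_succ]; exact goodDen_mul ih h

lemma goodDen_X1 {n : ℕ} (hn : 0 < n) : goodDen n (MvPolynomial.X 1) := by
  apply goodDen_of_ev hn _ 1
  simp [ev]

lemma goodDen_X1_sub_X0pow {n : ℕ} (hn : 0 < n) (s : ℕ) :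
    goodDen n (MvPolynomial.X 1 - MvPolynomial.X 0 ^ s) := by
  apply goodDen_of_ev hn _ (Polynomial.X ^ s + 1)
  rw [map_sub, map_pow]
  simp [ev]

lemma goodDen_X0 {n : ℕ} (hn : 0 < n) : goodDen n (MvPolynomial.X 0) := by
  intro p hp hdvd hpg
  obtain ⟨π, hirr, hπc, hπp⟩ := exists_factor hn hp hdvd
  have h1 : ι π ∣ MvPolynomial.X 0 := hπp.trans hpg
  have h2 : π ∣ Polynomial.X := by
    have := (ev 1).toRingHom.map_dvd h1
    change ev 1 (ι π) ∣ ev 1 (MvPolynomial.X 0) at this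
    rw [ev_iota 1 π] at this
    simpa [ev] using this
  have h3 : Associated π Polynomial.X :=
    (hirr.prime).associated_of_dvd Polynomial.prime_X h2
  have h4 : Polynomial.X ∣ Polynomial.cyclotomic n ℚ := h3.symm.dvd.trans hπc
  rw [Polynomial.X_dvd_iff] at h4
  exact cyclotomic_coeff_zero_ne n hn h4

/-! ### the `good` predicate on `K` -/

lemma map_ne_zero {x : R} (hx : x ≠ 0) : algebraMap R K x ≠ 0 := by
  intro h
  exact hx (IsFractionRing.injective R K (by simpa using h))

lemma qv_ne : qv ≠ 0 := map_ne_zero (MvPolynomial.X_ne_zero 0)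
lemma av_ne : av ≠ 0 := map_ne_zero (MvPolynomial.X_ne_zero 1)

/-- `z` is a ratio of polynomials whose denominator shares no factor with `Phi n`. -/
def good (n : ℕ) (z : K) : Prop :=
  ∃ u g : R, g ≠ 0 ∧ goodDen n g ∧ z * algebraMap R K g = algebraMap R K u

lemma good_ofR (n : ℕ) (u : R) : good n (algebraMap R K u) :=
  ⟨u, 1, one_ne_zero, goodDen_one n, by simp⟩

lemma good_one (n : ℕ) : good n 1 := by simpa using good_ofR n 1

lemma good_mul {n : ℕ} {z w : K} (hz : good n z) (hw : good n w) : good n (z * w) := by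
  obtain ⟨u1, g1, hg1, hgd1, he1⟩ := hz
  obtain ⟨u2, g2, hg2, hgd2, he2⟩ := hw
  refine ⟨u1 * u2, g1 * g2, mul_ne_zero hg1 hg2, goodDen_mul hgd1 hgd2, ?_⟩
  rw [map_mul, map_mul]
  calc z * w * (algebraMap R K g1 * algebraMap R K g2)
      = (z * algebraMap R K g1) * (w * algebraMap R K g2) := by ring
    _ = _ := by rw [he1, he2]

lemma good_neg {n : ℕ} {z : K} (hz : good n z) : good n (-z) := by
  obtain ⟨u, g, hg, hgd, he⟩ := hz
  exact ⟨-u, g, hg, hgd, by rw [map_neg, neg_mul, he]⟩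

lemma good_prod {n : ℕ} {ι' : Type*} (s : Finset ι') (f : ι' → K)
    (h : ∀ i ∈ s, good n (f i)) : good n (∏ i ∈ s, f i) := by
  classical
  induction s using Finset.induction with
  | empty => simpa using good_one n
  | @insert _ _ hx ih =>
      rw [Finset.prod_insert hx]
      exact good_mul (h _ (Finset.mem_insert_self _ _))
        (ih fun i hi => h i (Finset.mem_insert_of_mem hi))

lemma good_zpow_X0 {n : ℕ} (hn : 0 < n) (t : ℤ) : good n (qv ^ t) := by
  refine ⟨MvPolynomial.X 0 ^ (t + t.natAbs).toNat, MvPolynomial.X 0 ^ t.natAbs,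
    pow_ne_zero _ (MvPolynomial.X_ne_zero 0), goodDen_pow (goodDen_X0 hn) _, ?_⟩
  rw [map_pow, map_pow]
  rw [show (algebraMap R K (MvPolynomial.X 0)) = qv from rfl]
  rw [← zpow_natCast qv t.natAbs, ← zpow_add₀ qv_ne, ← zpow_natCast qv (t + t.natAbs).toNat,
    Int.toNat_of_nonneg (by omega)]

lemma good_zpow_X1 {n : ℕ} (hn : 0 < n) (t : ℤ) : good n (av ^ t) := by
  refine ⟨MvPolynomial.X 1 ^ (t + t.natAbs).toNat, MvPolynomial.X 1 ^ t.natAbs,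
    pow_ne_zero _ (MvPolynomial.X_ne_zero 1), goodDen_pow (goodDen_X1 hn) _, ?_⟩
  rw [map_pow, map_pow]
  rw [show (algebraMap R K (MvPolynomial.X 1)) = av from rfl]
  rw [← zpow_natCast av t.natAbs, ← zpow_add₀ av_ne, ← zpow_natCast av (t + t.natAbs).toNat,
    Int.toNat_of_nonneg (by omega)]

lemma good_zpow_neg_av {n : ℕ} (hn : 0 < n) (t : ℤ) : good n ((-av) ^ t) := by
  have : (-av) ^ t = (-1) ^ t * av ^ t := by
    rw [← mul_zpow]; norm_num
  rw [this]
  apply good_mul _ (good_zpow_X1 hn t)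
  rcases Int.even_or_odd t with h | h
  · rw [h.neg_one_zpow]; exact good_one n
  · rw [h.neg_one_zpow]
    simpa using good_neg (good_one n)

/-! ### `modCong` calculus -/

lemma modCong_add {M : R} {x y : K} (hx : modCong M x) (hy : modCong M y) :
    modCong M (x + y) := by
  obtain ⟨f1, g1, hg1, hgd1, he1⟩ := hx
  obtain ⟨f2, g2, hg2, hgd2, he2⟩ := hy
  refine ⟨f1 * g2 + f2 * g1, g1 * g2, mul_ne_zero hg1 hg2, ?_, ?_⟩
  · intro p hp hd hpg
    rcases hp.2.2 _ _ hpg with h | h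
    · exact hgd1 p hp hd h
    · exact hgd2 p hp hd h
  rw [map_mul]
  calc (x + y) * (algebraMap R K g1 * algebraMap R K g2)
      = (x * algebraMap R K g1) * algebraMap R K g2
        + (y * algebraMap R K g2) * algebraMap R K g1 := by ring
    _ = algebraMap R K (M * (f1 * g2 + f2 * g1)) := by
        rw [he1, he2, ← map_mul, ← map_mul, ← map_add]; ring_nf

lemma modCong_mul_good {n : ℕ} {x z : K} (hx : modCong (Phi n) x) (hz : good n z) :
    modCong (Phi n) (x * z) := by
  obtain ⟨f1, g1, hg1, hgd1, he1⟩ := hx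
  obtain ⟨u, g, hg, hgd, he⟩ := hz
  refine ⟨f1 * u, g1 * g, mul_ne_zero hg1 hg, ?_, ?_⟩
  · intro p hp hd hpg
    rcases hp.2.2 _ _ hpg with h | h
    · exact hgd1 p hp hd h
    · exact hgd p hp hd h
  · rw [map_mul]
    calc x * z * (algebraMap R K g1 * algebraMap R K g) =
        (x * algebraMap R K g1) * (z * algebraMap R K g) := by ring
      _ = _ := by rw [he1, he, ← map_mul]; ring_nf

lemma modCong_neg {M : R} {x : K} (hx : modCong M x) : modCong M (-x) := by
  obtain ⟨f, g, hg, hgd, he⟩ := hx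
  exact ⟨-f, g, hg, hgd, by rw [neg_mul, he, mul_neg, ← map_neg]⟩

lemma modCong_zero (M : R) : modCong M 0 :=
  ⟨0, 1, one_ne_zero, (fun p hp _ hpg => hp.2.1 (isUnit_of_dvd_one hpg)), by simp⟩

lemma modCong_dvd {M w : R} (h : M ∣ w) : modCong M (algebraMap R K w) := by
  obtain ⟨f, rfl⟩ := h
  exact ⟨f, 1, one_ne_zero, (fun p hp _ hpg => hp.2.1 (isUnit_of_dvd_one hpg)), by simp⟩

lemma modCong_congr {M : R} {x y : K} (h : modCong M x) (hxy : x = y) : modCong M y := hxy ▸ h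

lemma Phi_dvd (n : ℕ) (w : ℕ) : Phi n ∣ (MvPolynomial.X 0 ^ (n * w) - 1 : R) := by
  have h1 : Phi n ∣ (MvPolynomial.X 0 ^ n - 1 : R) := by
    rw [Phi_eq]
    have := (ι : Polynomial ℚ →ₐ[ℚ] R).toRingHom.map_dvd
      (Polynomial.cyclotomic.dvd_X_pow_sub_one n ℚ)
    simpa [ι] using this
  refine h1.trans ?_
  have := sub_dvd_pow_sub_pow (MvPolynomial.X 0 ^ n : R) 1 w
  rwa [one_pow, ← pow_mul] at this

lemma modCong_qpow {n : ℕ} (hn : 0 < n) {s t : ℤ} (h : (n : ℤ) ∣ (s - t)) :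
    modCong (Phi n) (qv ^ s - qv ^ t) := by
  obtain ⟨u, hu⟩ := h
  have key : ∀ u : ℤ, modCong (Phi n) (qv ^ ((n : ℤ) * u) - 1) := by
    have base : ∀ w : ℕ, modCong (Phi n) (qv ^ ((n : ℤ) * w) - 1) := by
      intro w
      have e1 : qv ^ ((n : ℤ) * w) = algebraMap R K (MvPolynomial.X 0 ^ (n * w)) := by
        rw [map_pow, show ((n : ℤ) * (w : ℤ)) = ((n * w : ℕ) : ℤ) by push_cast; ring,
          zpow_natCast]
        rfl
      rw [show qv ^ ((n : ℤ) * w) - 1 = algebraMap R K (MvPolynomial.X 0 ^ (n * w) - 1) by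
        rw [map_sub, map_one, e1]]
      exact modCong_dvd (Phi_dvd n w)
    intro u
    rcases le_or_gt 0 u with hu0 | hu0
    · obtain ⟨w, rfl⟩ := Int.eq_ofNat_of_zero_le hu0
      exact base w
    · have hw : ((-u).toNat : ℤ) = -u := Int.toNat_of_nonneg (by omega)
      have heq : qv ^ ((n : ℤ) * u) - 1 =
          (qv ^ ((n : ℤ) * ((-u).toNat : ℤ)) - 1) * (-(qv ^ ((n : ℤ) * u))) := by
        rw [hw]
        have hq : qv ^ ((n : ℤ) * -u) * qv ^ ((n : ℤ) * u) = 1 := by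
          rw [← zpow_add₀ qv_ne]; norm_num
        linear_combination hq
      rw [heq]
      exact modCong_mul_good (base _) (good_neg (good_zpow_X0 hn _))
  have heq : qv ^ s - qv ^ t = (qv ^ ((n : ℤ) * u) - 1) * qv ^ t := by
    rw [sub_mul, one_mul, ← zpow_add₀ qv_ne]
    congr 2
    omega
  rw [heq]
  exact modCong_mul_good (key u) (good_zpow_X0 hn t)

/-- congruence of products of good factors. -/
lemma modCong_prod {n : ℕ} {ι' : Type*} (s : Finset ι') (x y : ι' → K)
    (hx : ∀ i ∈ s, good n (x i)) (hy : ∀ i ∈ s, good n (y i))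
    (h : ∀ i ∈ s, modCong (Phi n) (x i - y i)) :
    modCong (Phi n) (∏ i ∈ s, x i - ∏ i ∈ s, y i) := by
  classical
  induction s using Finset.induction with
  | empty => simpa using modCong_zero (Phi n)
  | @insert a s ha ih =>
      rw [Finset.prod_insert ha, Finset.prod_insert ha]
      have key : x a * ∏ i ∈ s, x i - y a * ∏ i ∈ s, y i =
          (x a - y a) * ∏ i ∈ s, x i + (∏ i ∈ s, x i - ∏ i ∈ s, y i) * y a := by ring
      rw [key]
      refine modCong_add (modCong_mul_good (h _ (Finset.mem_insert_self _ _)) ?_)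
        (modCong_mul_good (ih ?_ ?_ ?_) (hy _ (Finset.mem_insert_self _ _)))
      · exact good_prod s x fun i hi => hx i (Finset.mem_insert_of_mem hi)
      · exact fun i hi => hx i (Finset.mem_insert_of_mem hi)
      · exact fun i hi => hy i (Finset.mem_insert_of_mem hi)
      · exact fun i hi => h i (Finset.mem_insert_of_mem hi)

/-! ### the specific factors -/

/-- numerator factor `1 - a q^{r+di}`. -/
def nf (r : ℤ) (d : ℕ) (i : ℕ) : K := 1 - av * qv ^ (r + (d : ℤ) * i)

/-- denominator factor `1 - q^{d(i+1)}/a`. -/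
def df (d : ℕ) (i : ℕ) : K := 1 - qv ^ ((d : ℤ) * ((i : ℤ) + 1)) / av

lemma poch_num_eq (r : ℤ) (d : ℕ) (j : ℕ) :
    poch (av * qv ^ r) (qv ^ (d : ℤ)) j = ∏ i ∈ Finset.range j, nf r d i := by
  refine Finset.prod_congr rfl fun i _ => ?_
  rw [nf, ← zpow_natCast (qv ^ (d : ℤ)) i, ← zpow_mul, zpow_add₀ qv_ne]
  ring

lemma poch_den_eq (d : ℕ) (j : ℕ) :
    poch (qv ^ (d : ℤ) / av) (qv ^ (d : ℤ)) j = ∏ i ∈ Finset.range j, df d i := by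
  refine Finset.prod_congr rfl fun i _ => ?_
  rw [df, ← zpow_natCast (qv ^ (d : ℤ)) i, ← zpow_mul, div_mul_eq_mul_div, ← zpow_add₀ qv_ne]
  rw [show (d : ℤ) + (d : ℤ) * i = (d : ℤ) * ((i : ℤ) + 1) by ring]

lemma good_one_sub_av_qv {n : ℕ} (hn : 0 < n) (t : ℤ) : good n (1 - av * qv ^ t) := by
  refine ⟨MvPolynomial.X 0 ^ t.natAbs -
      MvPolynomial.X 1 * MvPolynomial.X 0 ^ (t + t.natAbs).toNat,
    MvPolynomial.X 0 ^ t.natAbs, pow_ne_zero _ (MvPolynomial.X_ne_zero 0),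
    goodDen_pow (goodDen_X0 hn) _, ?_⟩
  rw [map_sub, map_pow, map_mul, map_pow]
  rw [show (algebraMap R K (MvPolynomial.X 0)) = qv from rfl,
    show (algebraMap R K (MvPolynomial.X 1)) = av from rfl]
  rw [← zpow_natCast qv t.natAbs, ← zpow_natCast qv (t + t.natAbs).toNat,
    Int.toNat_of_nonneg (by omega : (0:ℤ) ≤ t + t.natAbs), sub_mul, one_mul, mul_assoc,
    ← zpow_add₀ qv_ne]

lemma good_nf {n : ℕ} (hn : 0 < n) (r : ℤ) (d i : ℕ) : good n (nf r d i) :=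
  good_one_sub_av_qv hn _

lemma av_sub_qv_pow_ne (s : ℕ) : av - qv ^ s ≠ 0 := by
  have hR : (MvPolynomial.X 1 - MvPolynomial.X 0 ^ s : R) ≠ 0 := by
    intro h
    have := congrArg (ev (Polynomial.X ^ s + 1)) h
    rw [map_sub, map_pow, map_zero] at this
    simp [ev] at this
  have := map_ne_zero hR
  rwa [map_sub, map_pow] at this

lemma good_one_sub_qv_div_av {n : ℕ} (hn : 0 < n) (t : ℤ) (ht : 0 ≤ t) :
    good n (1 - qv ^ t / av) := by
  refine ⟨MvPolynomial.X 1 - MvPolynomial.X 0 ^ t.toNat, MvPolynomial.X 1,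
    MvPolynomial.X_ne_zero 1, goodDen_X1 hn, ?_⟩
  rw [map_sub, map_pow]
  rw [show (algebraMap R K (MvPolynomial.X 0)) = qv from rfl,
    show (algebraMap R K (MvPolynomial.X 1)) = av from rfl]
  rw [← zpow_natCast qv t.toNat, Int.toNat_of_nonneg ht, sub_mul, one_mul,
    div_mul_cancel₀ _ av_ne]

lemma good_df {n : ℕ} (hn : 0 < n) (d i : ℕ) : good n (df d i) :=
  good_one_sub_qv_div_av hn _ (by positivity)

lemma df_ne (d i : ℕ) : df d i ≠ 0 := by
  rw [df]
  intro h
  have h2 : av - qv ^ ((d : ℤ) * ((i : ℤ) + 1)) = 0 := by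
    have heq : av - qv ^ ((d : ℤ) * ((i : ℤ) + 1)) =
        (1 - qv ^ ((d : ℤ) * ((i : ℤ) + 1)) / av) * av := by
      rw [sub_mul, one_mul, div_mul_cancel₀ _ av_ne]
    rw [heq, h, zero_mul]
  have h3 : qv ^ ((d : ℤ) * ((i : ℤ) + 1)) = qv ^ (d * (i + 1) : ℕ) := by
    rw [show ((d : ℤ) * ((i : ℤ) + 1)) = ((d * (i + 1) : ℕ) : ℤ) by push_cast; ring,
      zpow_natCast]
  rw [h3] at h2
  exact av_sub_qv_pow_ne (d * (i + 1)) h2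

lemma qv_zpow_prod {ι' : Type*} (s : Finset ι') (f : ι' → ℤ) :
    ∏ i ∈ s, qv ^ f i = qv ^ (∑ i ∈ s, f i) := by
  classical
  induction s using Finset.induction with
  | empty => simp
  | @insert _ _ hx ih => rw [Finset.prod_insert hx, Finset.sum_insert hx, ih, ← zpow_add₀ qv_ne]

/-- paired factor `(-a q^{r+di})(1 - q^{d(m-i)}/a)`. -/
def pf (r : ℤ) (d m : ℕ) (i : ℕ) : K :=
  (-av * qv ^ (r + (d : ℤ) * i)) * (1 - qv ^ ((d : ℤ) * ((m : ℤ) - i)) / av)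

lemma good_pf {n : ℕ} (hn : 0 < n) (r : ℤ) (d m i : ℕ) (hi : i ≤ m) :
    good n (pf r d m i) := by
  rw [pf]
  refine good_mul ?_ (good_one_sub_qv_div_av hn _ ?_)
  · have : -av * qv ^ (r + (d : ℤ) * i) = -(av * qv ^ (r + (d : ℤ) * i)) := by ring
    rw [this]
    refine good_neg (good_mul ?_ (good_zpow_X0 hn _))
    simpa using good_zpow_X1 hn 1
  · have : (0:ℤ) ≤ (m : ℤ) - i := by
      have := hi; omega
    positivity

lemma factor_cong {n : ℕ} (hn : 0 < n) {d m : ℕ} {r : ℤ}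
    (hdvd : (n : ℤ) ∣ ((d : ℤ) * m + r)) (i : ℕ) :
    modCong (Phi n) (nf r d i - pf r d m i) := by
  have h1 : qv ^ (r + (d:ℤ)*i) * qv ^ ((d:ℤ)*((m:ℤ) - i)) = qv ^ ((d:ℤ)*m + r) := by
    rw [← zpow_add₀ qv_ne]; congr 1; ring
  have h2 : av * av⁻¹ = 1 := mul_inv_cancel₀ av_ne
  have key : nf r d i - pf r d m i = -(qv ^ ((d : ℤ) * m + r) - qv ^ (0 : ℤ)) := by
    rw [nf, pf, div_eq_mul_inv, zpow_zero]
    linear_combination -h1 - qv ^ (r + (d:ℤ)*i) * qv ^ ((d:ℤ)*((m:ℤ)-i)) * h2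
  rw [key]
  refine modCong_neg (modCong_qpow hn ?_)
  simpa using hdvd

lemma goodDen_prod {n : ℕ} {ι' : Type*} (s : Finset ι') (f : ι' → R)
    (h : ∀ i ∈ s, goodDen n (f i)) : goodDen n (∏ i ∈ s, f i) := by
  classical
  induction s using Finset.induction with
  | empty => simpa using goodDen_one n
  | @insert _ _ hx ih =>
      rw [Finset.prod_insert hx]
      exact goodDen_mul (h _ (Finset.mem_insert_self _ _))
        (ih fun i hi => h i (Finset.mem_insert_of_mem hi))

lemma X1_sub_X0pow_ne (s : ℕ) : (MvPolynomial.X 1 - MvPolynomial.X 0 ^ s : R) ≠ 0 := by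
  intro h
  have := congrArg (ev (Polynomial.X ^ s + 1)) h
  rw [map_sub, map_pow, map_zero] at this
  simp [ev] at this

lemma good_inv_df_prod {n : ℕ} (hn : 0 < n) (d : ℕ) (j : ℕ) :
    good n ((∏ i ∈ Finset.range j, df d i)⁻¹) := by
  have hDne : (∏ i ∈ Finset.range j, df d i) ≠ 0 :=
    Finset.prod_ne_zero_iff.mpr fun i _ => df_ne d i
  refine ⟨MvPolynomial.X 1 ^ j,
    ∏ i ∈ Finset.range j, (MvPolynomial.X 1 - MvPolynomial.X 0 ^ (d * (i + 1))), ?_, ?_, ?_⟩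
  · exact Finset.prod_ne_zero_iff.mpr fun i _ => X1_sub_X0pow_ne _
  · exact goodDen_prod _ _ fun i _ => goodDen_X1_sub_X0pow hn _
  · have hg : algebraMap R K
        (∏ i ∈ Finset.range j, (MvPolynomial.X 1 - MvPolynomial.X 0 ^ (d * (i + 1)))) =
        ∏ i ∈ Finset.range j, (av * df d i) := by
      rw [map_prod]
      refine Finset.prod_congr rfl fun i _ => ?_
      rw [map_sub, map_pow, df]
      rw [show (algebraMap R K (MvPolynomial.X 0)) = qv from rfl,
        show (algebraMap R K (MvPolynomial.X 1)) = av from rfl]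
      rw [show qv ^ ((d : ℤ) * ((i : ℤ) + 1)) = qv ^ (d * (i + 1) : ℕ) by
        rw [show ((d : ℤ) * ((i : ℤ) + 1)) = ((d * (i + 1) : ℕ) : ℤ) by push_cast; ring,
          zpow_natCast]]
      rw [mul_sub, mul_one, mul_div_cancel₀ _ av_ne]
    rw [hg, Finset.prod_mul_distrib, Finset.prod_const, Finset.card_range, map_pow]
    rw [show (algebraMap R K (MvPolynomial.X 1)) = av from rfl]
    rw [mul_comm (av ^ j), ← mul_assoc, inv_mul_cancel₀ hDne, one_mul]

lemma main_case {n m d k : ℕ} (hn : 0 < n) {r : ℤ}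
    (hdvd : (n : ℤ) ∣ ((d : ℤ) * m + r)) (hk2 : 2 * k ≤ m) :
    modCong (Phi n)
      (poch (av * qv ^ r) (qv ^ (d : ℤ)) (m - k) /
          poch (qv ^ (d : ℤ) / av) (qv ^ (d : ℤ)) (m - k) -
        (-av) ^ ((m : ℤ) - 2 * k) *
          (poch (av * qv ^ r) (qv ^ (d : ℤ)) k / poch (qv ^ (d : ℤ) / av) (qv ^ (d : ℤ)) k) *
          qv ^ ((m : ℤ) * ((d : ℤ) * m - d + 2 * r) / 2 + ((d : ℤ) - r) * k)) := by
  set M2 := m - 2 * k with hM2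
  have hmk : m - k = k + M2 := by omega
  set e : ℤ := (m : ℤ) * ((d : ℤ) * m - (d : ℤ) + 2 * r) / 2 + ((d : ℤ) - r) * k with he
  set S0 : ℤ := ∑ l ∈ Finset.range M2, (r + (d : ℤ) * (k + l)) with hS0
  -- nonvanishing
  have hBk_ne : (∏ i ∈ Finset.range k, df d i) ≠ 0 :=
    Finset.prod_ne_zero_iff.mpr fun i _ => df_ne d i
  have hD_ne : (∏ l ∈ Finset.range M2, df d (k + l)) ≠ 0 :=
    Finset.prod_ne_zero_iff.mpr fun i _ => df_ne d _
  -- the three pieces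
  set C : K := (-av) ^ ((m : ℤ) - 2 * k) * qv ^ e with hC
  set w : K := (∏ l ∈ Finset.range M2, nf r d (k + l)) -
      C * ∏ l ∈ Finset.range M2, df d (k + l) with hw
  set z : K := (∏ i ∈ Finset.range k, nf r d i) *
      ((∏ i ∈ Finset.range k, df d i) * (∏ l ∈ Finset.range M2, df d (k + l)))⁻¹ with hz
  -- rewrite target
  rw [poch_num_eq, poch_den_eq, poch_num_eq, poch_den_eq, hmk,
    Finset.prod_range_add (fun i => nf r d i) k M2,
    Finset.prod_range_add (fun i => df d i) k M2]
  have claim1 :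
      (∏ i ∈ Finset.range k, nf r d i) * (∏ l ∈ Finset.range M2, nf r d (k + l)) /
        ((∏ i ∈ Finset.range k, df d i) * (∏ l ∈ Finset.range M2, df d (k + l))) -
        (-av) ^ ((m : ℤ) - 2 * k) *
          ((∏ i ∈ Finset.range k, nf r d i) / (∏ i ∈ Finset.range k, df d i)) * qv ^ e
        = w * z := by
    rw [hw, hz, hC]
    field_simp
  rw [claim1]
  -- goodness of z
  have claim2 : good n z := by
    rw [hz, ← Finset.prod_range_add (fun i => df d i) k M2]
    exact good_mul (good_prod _ _ fun i _ => good_nf hn r d i)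
      (good_inv_df_prod hn d (k + M2))
  -- congruence for w
  have claim3 : modCong (Phi n) w := by
    -- step B : ∏ pf = P0 * ∏ df
    have stepB : (∏ l ∈ Finset.range M2, pf r d m (k + l)) =
        ((-av) ^ M2 * qv ^ S0) * ∏ l ∈ Finset.range M2, df d (k + l) := by
      rw [hS0]
      calc (∏ l ∈ Finset.range M2, pf r d m (k + l))
          = (∏ l ∈ Finset.range M2, (-av * qv ^ (r + (d : ℤ) * (k + l)))) *
            ∏ l ∈ Finset.range M2, (1 - qv ^ ((d : ℤ) * ((m : ℤ) - (k + l))) / av) := by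
            rw [← Finset.prod_mul_distrib]
            exact Finset.prod_congr rfl fun l _ => by rw [pf]; push_cast; ring_nf
        _ = ((-av) ^ M2 * qv ^ (∑ l ∈ Finset.range M2, (r + (d : ℤ) * (k + l)))) *
            ∏ l ∈ Finset.range M2, df d (k + l) := by
            congr 1
            · rw [Finset.prod_mul_distrib, Finset.prod_const, Finset.card_range,
                qv_zpow_prod]
            · -- reflection
              rw [← Finset.prod_range_reflect (fun l => df d (k + l)) M2]
              refine Finset.prod_congr rfl fun l hl => ?_
              rw [Finset.mem_range] at hl
              have hExp : ((k + (M2 - 1 - l) : ℕ) : ℤ) + 1 = (m : ℤ) - ((k : ℤ) + l) := by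
                omega
              rw [df, hExp]
    -- step A : product congruence
    have stepA : modCong (Phi n)
        ((∏ l ∈ Finset.range M2, nf r d (k + l)) -
          ∏ l ∈ Finset.range M2, pf r d m (k + l)) := by
      refine modCong_prod _ _ _ (fun l _ => good_nf hn r d _) (fun l hl => ?_)
        (fun l _ => factor_cong hn hdvd _)
      rw [Finset.mem_range] at hl
      exact good_pf hn r d m (k + l) (by omega)
    -- step C : scalar congruence
    have hdvdS : (n : ℤ) ∣ (S0 - e) := by
      have hS : 2 * (∑ l ∈ Finset.range M2, (l : ℤ)) = (M2 : ℤ) * ((M2 : ℤ) - 1) := by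
        have h := Finset.sum_range_id_mul_two M2
        rcases Nat.eq_zero_or_pos M2 with h0 | h0
        · simp [h0]
        · have h2 := congrArg (Nat.cast : ℕ → ℤ) h
          push_cast [Nat.cast_sub h0] at h2
          linarith
      have hSval : S0 = (M2 : ℤ) * r + (d : ℤ) * ((M2 : ℤ) * k) +
          (d : ℤ) * (∑ l ∈ Finset.range M2, (l : ℤ)) := by
        rw [hS0, Finset.sum_add_distrib, Finset.sum_const, Finset.card_range,
          ← Finset.mul_sum, Finset.sum_add_distrib, Finset.sum_const, Finset.card_range]
        simp only [nsmul_eq_mul]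
        push_cast
        ring
      have hdvd2 : (2 : ℤ) ∣ (m : ℤ) * ((d : ℤ) * m - (d : ℤ) + 2 * r) := by
        obtain ⟨c, hc⟩ := Int.even_mul_succ_self ((m : ℤ) - 1)
        exact ⟨(d : ℤ) * c + (m : ℤ) * r, by linear_combination (d : ℤ) * hc⟩
      have he2 : 2 * e = (m : ℤ) * ((d : ℤ) * m - (d : ℤ) + 2 * r) +
          2 * ((d : ℤ) - r) * (k : ℤ) := by
        rw [he, mul_add, Int.mul_ediv_cancel' hdvd2]
        ring
      have hm : (m : ℤ) = 2 * k + M2 := by omega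
      have h2 : 2 * (S0 - e) = 2 * (-(k : ℤ) * ((d : ℤ) * m + r)) := by
        rw [hSval]
        linear_combination (d : ℤ) * hS - he2 +
          (-2*r - (d : ℤ) * ((m : ℤ) - 1 + (M2 : ℤ))) * hm
      have h3 : S0 - e = -(k : ℤ) * ((d : ℤ) * m + r) :=
        mul_left_cancel₀ two_ne_zero h2
      rw [h3]
      exact Dvd.dvd.mul_left hdvd _
    have stepC : modCong (Phi n) (((-av) ^ M2 * qv ^ S0) - C) := by
      have hCeq : C = (-av) ^ M2 * qv ^ e := by
        rw [hC]
        congr 1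
        rw [show ((m : ℤ) - 2 * k) = ((M2 : ℕ) : ℤ) by omega, zpow_natCast]
      rw [hCeq, ← mul_sub]
      have : (-av) ^ M2 * (qv ^ S0 - qv ^ e) = (qv ^ S0 - qv ^ e) * (-av) ^ M2 := by ring
      rw [this]
      refine modCong_mul_good (modCong_qpow hn hdvdS) ?_
      rw [← zpow_natCast (-av) M2]
      exact good_zpow_neg_av hn _
    -- assemble
    have hwkey : w = ((∏ l ∈ Finset.range M2, nf r d (k + l)) -
          ∏ l ∈ Finset.range M2, pf r d m (k + l)) +
        (((-av) ^ M2 * qv ^ S0) - C) * ∏ l ∈ Finset.range M2, df d (k + l) := by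
      rw [hw, stepB]
      ring
    rw [hwkey]
    exact modCong_add stepA
      (modCong_mul_good stepC (good_prod _ _ fun l _ => good_df hn d _))
  exact modCong_mul_good claim3 claim2

lemma good_poch_ratio {n : ℕ} (hn : 0 < n) (r : ℤ) (d j : ℕ) :
    good n (poch (av * qv ^ r) (qv ^ (d : ℤ)) j / poch (qv ^ (d : ℤ) / av) (qv ^ (d : ℤ)) j) := by
  rw [poch_num_eq, poch_den_eq, div_eq_mul_inv]
  exact good_mul (good_prod _ _ fun i _ => good_nf hn r d i) (good_inv_df_prod hn d j)

lemma stmt_main (m n d : ℕ) (hn : 0 < n) (r : ℤ)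
    (hdvd : (n : ℤ) ∣ ((d : ℤ) * m + r)) (k : ℕ) (hk : k ≤ m) :
    modCong (Phi n)
      (poch (av * qv ^ r) (qv ^ (d : ℤ)) (m - k) /
          poch (qv ^ (d : ℤ) / av) (qv ^ (d : ℤ)) (m - k) -
        (-av) ^ ((m : ℤ) - 2 * k) *
          (poch (av * qv ^ r) (qv ^ (d : ℤ)) k / poch (qv ^ (d : ℤ) / av) (qv ^ (d : ℤ)) k) *
          qv ^ ((m : ℤ) * ((d : ℤ) * m - (d : ℤ) + 2 * r) / 2 + ((d : ℤ) - r) * k)) := by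
  rcases le_or_gt (2 * k) m with h2k | h2k
  · exact main_case hn hdvd h2k
  · -- reduce to the reflected case
    set k' := m - k with hk'
    have h2k' : 2 * k' ≤ m := by omega
    have hmc := main_case (n := n) (m := m) (d := d) (k := k') hn hdvd h2k'
    rw [show m - k' = k from by omega] at hmc
    set Pk : K := poch (av * qv ^ r) (qv ^ (d : ℤ)) k /
      poch (qv ^ (d : ℤ) / av) (qv ^ (d : ℤ)) k with hPk
    set Pmk : K := poch (av * qv ^ r) (qv ^ (d : ℤ)) k' /
      poch (qv ^ (d : ℤ) / av) (qv ^ (d : ℤ)) k' with hPmk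
    set ek : ℤ := (m : ℤ) * ((d : ℤ) * m - (d : ℤ) + 2 * r) / 2 + ((d : ℤ) - r) * k with hek
    set ek' : ℤ := (m : ℤ) * ((d : ℤ) * m - (d : ℤ) + 2 * r) / 2 + ((d : ℤ) - r) * k' with hek'
    have hav_ne : (-av) ≠ 0 := neg_ne_zero.mpr av_ne
    have hinv : (-av) ^ ((m : ℤ) - 2 * k) * (-av) ^ ((m : ℤ) - 2 * (k' : ℤ)) = 1 := by
      rw [← zpow_add₀ hav_ne]
      rw [show ((m : ℤ) - 2 * k) + ((m : ℤ) - 2 * (k' : ℤ)) = 0 from by omega]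
      exact zpow_zero _
    have hqs : qv ^ ek * qv ^ ek' = qv ^ (ek + ek') := (zpow_add₀ qv_ne _ _).symm
    have key : Pmk - (-av) ^ ((m : ℤ) - 2 * k) * Pk * qv ^ ek =
        (Pk - (-av) ^ ((m : ℤ) - 2 * (k' : ℤ)) * Pmk * qv ^ ek') *
          (-((-av) ^ ((m : ℤ) - 2 * k) * qv ^ ek)) +
        (1 - qv ^ (ek + ek')) * Pmk := by
      linear_combination (-(Pmk * qv ^ ek * qv ^ ek')) * hinv - Pmk * hqs
    rw [key]
    have hdvd2 : (2 : ℤ) ∣ (m : ℤ) * ((d : ℤ) * m - (d : ℤ) + 2 * r) := by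
      obtain ⟨c, hc⟩ := Int.even_mul_succ_self ((m : ℤ) - 1)
      exact ⟨(d : ℤ) * c + (m : ℤ) * r, by linear_combination (d : ℤ) * hc⟩
    have h2ek : 2 * ek = (m : ℤ) * ((d : ℤ) * m - (d : ℤ) + 2 * r) +
        2 * ((d : ℤ) - r) * (k : ℤ) := by
      rw [hek, mul_add, Int.mul_ediv_cancel' hdvd2]; ring
    have h2ek' : 2 * ek' = (m : ℤ) * ((d : ℤ) * m - (d : ℤ) + 2 * r) +
        2 * ((d : ℤ) - r) * (k' : ℤ) := by
      rw [hek', mul_add, Int.mul_ediv_cancel' hdvd2]; ring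
    have hkk : (k : ℤ) + (k' : ℤ) = (m : ℤ) := by omega
    have hsum2 : 2 * (ek + ek') = 2 * ((m : ℤ) * ((d : ℤ) * m + r)) := by
      linear_combination h2ek + h2ek' + 2 * ((d : ℤ) - r) * hkk
    have hsum : ek + ek' = (m : ℤ) * ((d : ℤ) * m + r) :=
      mul_left_cancel₀ two_ne_zero hsum2
    have cong1 : modCong (Phi n) (1 - qv ^ (ek + ek')) := by
      have h := modCong_neg (modCong_qpow hn (n := n) (s := ek + ek') (t := 0)
        (by rw [hsum, sub_zero]; exact hdvd.mul_left _))
      refine modCong_congr h ?_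
      rw [zpow_zero]; ring
    refine modCong_add (modCong_mul_good hmc ?_) (modCong_mul_good cong1 ?_)
    · exact good_neg (good_mul (good_zpow_neg_av hn _) (good_zpow_X0 hn _))
    · rw [hPmk]
      exact good_poch_ratio hn r d k'

end Aux

theorem stmt0 (m n d : ℕ) (hm0 : 0 < m) (hn : 0 < n) (hd : 0 < d)
    (hm : m ≤ n - 1) (r : ℤ) (hmr : (d * m : ℤ) ≡ -r [ZMOD (n : ℤ)])
    (k : ℕ) (hk : k ≤ m) :
    modCong (Phi n)
      (poch (av * qv ^ r) (qv ^ (d : ℤ)) (m - k) / poch (qv ^ (d : ℤ) / av) (qv ^ (d : ℤ)) (m - k) -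
        (-av) ^ ((m : ℤ) - 2 * k) *
          (poch (av * qv ^ r) (qv ^ (d : ℤ)) k / poch (qv ^ (d : ℤ) / av) (qv ^ (d : ℤ)) k) *
          qv ^ ((m : ℤ) * (d * m - d + 2 * r) / 2 + (d - r) * k)) := by
  have h := Int.ModEq.dvd hmr
  have hdvd : (n : ℤ) ∣ ((d : ℤ) * m + r) := by
    have h2 : (d : ℤ) * m + r = -((-r) - (d : ℤ) * m) := by ring
    rw [h2]
    exact dvd_neg.mpr h
  exact Aux.stmt_main m n d hn r hdvd k hk

end
end

section
/- Let n, d be positive integers with gcd(n,d) = 1, let r be a nonzero integer, and let m with 0 ≤ m ≤ n−1 satisfy d·m ≡ −r (mod n). Then for every integer k with m < k ≤ n−1, the q-shifted factorial (q^r; q^d)_k is divisible by the n-th cyclotomic polynomial Φ_n(q) in the polynomial ring ℤ[q], while (q^d; q^d)_k is coprime to Φ_n(q). -/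
noncomputable section

/-- Laurent polynomials over ℤ in the variable `q` (needed since `q^r` may have `r < 0`). -/
abbrev L : Type := LaurentPolynomial ℤ

/-- The q-shifted factorial `(q^x; q^d)_k = ∏_{i<k} (1 - q^{x+di})` as a Laurent polynomial. -/
def lpoch (x d : ℤ) (k : ℕ) : L :=
  ∏ i ∈ Finset.range k, (1 - LaurentPolynomial.T (x + d * i))

/-- The n-th cyclotomic polynomial, viewed as a Laurent polynomial. -/
def lPhi (n : ℕ) : L := (Polynomial.cyclotomic n ℤ).toLaurent

open Polynomial LaurentPolynomial

instance : IsDomain L := by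
  haveI : IsLocalization (Submonoid.powers (Polynomial.X : ℤ[X])) L :=
    LaurentPolynomial.isLocalization
  exact IsLocalization.isDomain_of_le_nonZeroDivisors L (R := ℤ[X]) (M := Submonoid.powers (Polynomial.X : ℤ[X]))
    (powers_le_nonZeroDivisors_of_noZeroDivisors (Polynomial.X_ne_zero (R := ℤ)))

lemma phi_prime {n : ℕ} (hn : 0 < n) : Prime (cyclotomic n ℤ) :=
  (cyclotomic.irreducible hn).prime

lemma phi_not_dvd_X {n : ℕ} (hn : 0 < n) : ¬ (cyclotomic n ℤ ∣ (X : ℤ[X])) := by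
  intro h
  have h1 : cyclotomic n ℤ ∣ X ^ n - 1 := cyclotomic.dvd_X_pow_sub_one n ℤ
  have h2 : cyclotomic n ℤ ∣ (X : ℤ[X]) ^ n := h.trans (dvd_pow_self X hn.ne')
  have h3 : cyclotomic n ℤ ∣ 1 := by
    have := dvd_sub h2 h1
    simpa using this
  exact (phi_prime hn).not_unit (isUnit_of_dvd_one h3)

/-- Reflect divisibility along `toLaurent` for a prime not dividing `X`. -/
lemma toLaurent_dvd_reflect {Φ f : ℤ[X]} (hΦ : Prime Φ) (hX : ¬ Φ ∣ X)
    (h : Φ.toLaurent ∣ f.toLaurent) : Φ ∣ f := by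
  obtain ⟨c, hc⟩ := h
  obtain ⟨s, c', hc'⟩ := c.exists_T_pow
  have : (f * X ^ s).toLaurent = (Φ * c').toLaurent := by
    simp only [map_mul, Polynomial.toLaurent_X_pow, hc', hc]
    ring
  have hh : f * X ^ s = Φ * c' := Polynomial.toLaurent_injective this
  have : Φ ∣ f * X ^ s := ⟨c', hh⟩
  rcases hΦ.dvd_mul.mp this with h' | h'
  · exact h'
  · exact absurd (hΦ.dvd_of_dvd_pow h') hX

lemma prime_toLaurent {Φ : ℤ[X]} (hΦ : Prime Φ) (hX : ¬ Φ ∣ X) :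
    Prime Φ.toLaurent := by
  constructor
  · simp only [ne_eq, Polynomial.toLaurent_ne_zero]
    exact hΦ.ne_zero
  constructor
  · intro hu
    have : Φ.toLaurent ∣ (1 : ℤ[X]).toLaurent := by simpa using hu.dvd
    exact hΦ.not_unit (isUnit_of_dvd_one (toLaurent_dvd_reflect hΦ hX this))
  · intro a b hab
    obtain ⟨sa, a', ha⟩ := a.exists_T_pow
    obtain ⟨sb, b', hb⟩ := b.exists_T_pow
    have hab' : Φ.toLaurent ∣ (a' * b').toLaurent := by
      have heq : a * T (sa : ℤ) * (b * T (sb : ℤ)) = a * b * (T (sa : ℤ) * T (sb : ℤ)) := by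
        ring
      rw [map_mul, ha, hb, heq]
      exact hab.mul_right _
    have := toLaurent_dvd_reflect hΦ hX hab'
    rcases hΦ.dvd_mul.mp this with h' | h'
    · left
      have : Φ.toLaurent ∣ a * T (sa : ℤ) := ha ▸ map_dvd Polynomial.toLaurent h'
      exact ((isUnit_T _).dvd_mul_right).mp this
    · right
      have : Φ.toLaurent ∣ b * T (sb : ℤ) := hb ▸ map_dvd Polynomial.toLaurent h'
      exact ((isUnit_T _).dvd_mul_right).mp this

lemma lPhi_dvd_T_sub_one {n : ℕ} (hn : 0 < n) {c : ℕ} (hc : n ∣ c) :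
    lPhi n ∣ T (c : ℤ) - 1 := by
  obtain ⟨e, rfl⟩ := hc
  have h1 : cyclotomic n ℤ ∣ X ^ (n * e) - 1 := by
    refine (cyclotomic.dvd_X_pow_sub_one n ℤ).trans ?_
    rw [pow_mul]
    simpa using sub_dvd_pow_sub_pow ((X : ℤ[X]) ^ n) 1 e
  have := map_dvd Polynomial.toLaurent h1
  simpa [lPhi, Polynomial.toLaurent_X_pow] using this

lemma lPhi_dvd_one_sub_T {n : ℕ} (hn : 0 < n) {a : ℤ} (ha : (n : ℤ) ∣ a) :
    lPhi n ∣ 1 - T a := by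
  rcases eq_or_ne a 0 with rfl | ha0
  · simp [LaurentPolynomial.T_zero]
  · have hc : n ∣ a.natAbs := by
      have := Int.natAbs_dvd_natAbs.mpr ha
      simpa using this
    have key := lPhi_dvd_T_sub_one hn hc
    rcases Int.natAbs_eq a with h | h
    · rw [h]
      simpa using key.neg_right
    · have : (1 : L) - T a = T a * (T (a.natAbs : ℤ) - 1) := by
        rw [mul_sub, ← T_add, mul_one]
        have : a + (a.natAbs : ℤ) = 0 := by omega
        rw [this, T_zero]
      rw [this]
      exact key.mul_left _

lemma not_lPhi_dvd {n : ℕ} (hn : 0 < n) {j : ℕ} (hj : ¬ n ∣ j) :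
    ¬ lPhi n ∣ 1 - T (j : ℤ) := by
  intro h
  have hprime : Prime (cyclotomic n ℤ) := phi_prime hn
  have hX := phi_not_dvd_X hn
  have h1 : lPhi n ∣ ((X : ℤ[X]) ^ j - 1).toLaurent := by
    have : ((X : ℤ[X]) ^ j - 1).toLaurent = -(1 - T (j : ℤ)) := by
      rw [map_sub, map_one, Polynomial.toLaurent_X_pow]
      ring
    rw [this]
    exact h.neg_right
  have h2 : cyclotomic n ℤ ∣ X ^ j - 1 := toLaurent_dvd_reflect hprime hX h1
  -- evaluate at a primitive root of unity
  set ζ : ℂ := Complex.exp (2 * Real.pi * Complex.I / n)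
  have hζ : IsPrimitiveRoot ζ n := Complex.isPrimitiveRoot_exp n hn.ne'
  have hroot : (Polynomial.aeval ζ) (cyclotomic n ℤ) = 0 := by
    have := hζ.isRoot_cyclotomic hn (R := ℂ)
    rw [Polynomial.aeval_def, Polynomial.eval₂_eq_eval_map, Polynomial.map_cyclotomic]
    exact this
  have : (Polynomial.aeval ζ) ((X : ℤ[X]) ^ j - 1) = 0 := by
    obtain ⟨c, hc⟩ := h2
    rw [hc, map_mul, hroot, zero_mul]
  have hζj : ζ ^ j = 1 := by
    simpa [sub_eq_zero] using this
  exact hj (hζ.dvd_of_pow_eq_one j hζj)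

theorem stmt6 (n d : ℕ) (hn : 0 < n) (hd : 0 < d) (hnd : Nat.gcd n d = 1)
    (r : ℤ) (hr : r ≠ 0) (m : ℕ) (hm : m ≤ n - 1)
    (hmr : (d * m : ℤ) ≡ -r [ZMOD (n : ℤ)])
    (k : ℕ) (hk1 : m < k) (hk2 : k ≤ n - 1) :
    lPhi n ∣ lpoch r d k ∧
      (∀ p : L, Prime p → p ∣ lPhi n → ¬ p ∣ lpoch d d k) := by
  constructor
  · -- first part
    have hna : (n : ℤ) ∣ r + d * m := by
      have h := Int.ModEq.dvd hmr
      have : r + (d : ℤ) * m = -(-r - d * m) := by ring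
      rw [this]
      exact dvd_neg.mpr h
    have hfac : lPhi n ∣ 1 - T ((r : ℤ) + d * m) := lPhi_dvd_one_sub_T hn hna
    exact hfac.trans (Finset.dvd_prod_of_mem _ (Finset.mem_range.mpr hk1))
  · intro p hp hpPhi hpoch
    have hprime : Prime (cyclotomic n ℤ) := phi_prime hn
    have hLprime : Prime (lPhi n) := prime_toLaurent hprime (phi_not_dvd_X hn)
    have hassoc := hp.associated_of_dvd hLprime hpPhi
    have hdvd : lPhi n ∣ lpoch d d k := hassoc.symm.dvd.trans hpoch
    obtain ⟨i, hi, hdvd'⟩ := hLprime.exists_mem_finset_dvd hdvd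
    rw [Finset.mem_range] at hi
    have hcast : (d : ℤ) + d * i = ((d * (i + 1) : ℕ) : ℤ) := by push_cast; ring
    rw [hcast] at hdvd'
    refine not_lPhi_dvd hn ?_ hdvd'
    intro hnj
    have hni : n ∣ i + 1 := (Nat.Coprime.dvd_of_dvd_mul_left hnd hnj)
    have : n ≤ i + 1 := Nat.le_of_dvd (Nat.succ_pos i) hni
    omega

end
end

section
/- Let r = 1 or r = −1 and let n > 1, d ≥ 3 be integers with n ≡ −r (mod d). Define f(x) to be the least nonnegative integer k such that (q^x; q^d)_k is divisible by Φ_n(q). Then f(d−r) = (n+r)/d, f(r) = (d(n+1)−(n+r))/d, f(d) = n, f(2r) = (d(n+1)−2(n+r))/d, and the inequalities f(d) ≥ f(r) > (dn−n−r)/d ≥ f(2r) ≥ f(d−r) hold. -/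
noncomputable section

open LaurentPolynomial Polynomial

/-- Evaluation of a Laurent polynomial at a unit of ℂ. -/
def lev (z : ℂˣ) : L →ₐ[ℤ] ℂ :=
  AddMonoidAlgebra.lift ℤ ℂ ℤ ((Units.coeHom ℂ).comp (zpowersHom ℂˣ z))

lemma lev_T (z : ℂˣ) (m : ℤ) : lev z (T m) = (z : ℂ) ^ m := by
  have h : (T m : L) = AddMonoidAlgebra.single m 1 := rfl
  rw [lev, h, AddMonoidAlgebra.lift_single]
  simp

lemma lev_toLaurent (z : ℂˣ) (p : ℤ[X]) :
    lev z (toLaurent p) = Polynomial.eval₂ (Int.castRingHom ℂ) (z : ℂ) p := by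
  have : ((lev z : L →+* ℂ).comp (toLaurent : ℤ[X] →+* L)) =
      Polynomial.eval₂RingHom (Int.castRingHom ℂ) (z : ℂ) := by
    apply Polynomial.ringHom_ext
    · intro a
      simp [Polynomial.toLaurent_C, ← LaurentPolynomial.C_eq_algebraMap, AlgHom.commutes]
    · simp [Polynomial.toLaurent_X, lev_T]
  exact RingHom.congr_fun this p

lemma lPhi_dvd_T_mul_sub_one (n : ℕ) (s : ℕ) :
    lPhi n ∣ (T ((n * s : ℕ) : ℤ) - 1 : L) := by
  have h1 : Polynomial.cyclotomic n ℤ ∣ X ^ (n * s) - 1 := by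
    refine (Polynomial.cyclotomic.dvd_X_pow_sub_one n ℤ).trans ?_
    have := sub_dvd_pow_sub_pow (X ^ n : ℤ[X]) 1 s
    simpa [← pow_mul] using this
  have := map_dvd (toLaurent : ℤ[X] →+* L) h1
  simpa [lPhi, Polynomial.toLaurent_X_pow] using this

lemma lPhi_dvd_one_sub_T_s9 {n : ℕ} {m : ℤ} (h : (n : ℤ) ∣ m) :
    lPhi n ∣ (1 - T m : L) := by
  obtain ⟨t, rfl⟩ := h
  rcases le_or_gt 0 t with ht | ht
  · have h1 := lPhi_dvd_T_mul_sub_one n t.toNat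
    have he : ((n * t.toNat : ℕ) : ℤ) = (n : ℤ) * t := by
      push_cast [Int.toNat_of_nonneg ht]; ring
    rw [he] at h1
    simpa using h1.neg_right
  · have h1 := lPhi_dvd_T_mul_sub_one n (-t).toNat
    have he : ((n * (-t).toNat : ℕ) : ℤ) = -((n : ℤ) * t) := by
      push_cast [Int.toNat_of_nonneg (by omega : (0:ℤ) ≤ -t)]; ring
    rw [he] at h1
    have key : (1 - T ((n : ℤ) * t) : L) = T ((n : ℤ) * t) * (T (-((n:ℤ)*t)) - 1) := by
      rw [mul_sub, ← T_add]
      simp [T_zero]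
    rw [key]
    exact h1.mul_left _

lemma lPhi_dvd_lpoch_iff (n : ℕ) (hn : 0 < n) (x d : ℤ) (k : ℕ) :
    lPhi n ∣ lpoch x d k ↔ ∃ i < k, (n : ℤ) ∣ x + d * i := by
  constructor
  · intro hdvd
    have hne : Complex.exp (2 * Real.pi * Complex.I / n) ≠ 0 := Complex.exp_ne_zero _
    set ζ := Complex.exp (2 * Real.pi * Complex.I / n) with hζ
    have hprim : IsPrimitiveRoot ζ n := Complex.isPrimitiveRoot_exp n hn.ne'
    set u : ℂˣ := Units.mk0 ζ hne with hu
    have h0 : lev u (lPhi n) = 0 := by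
      rw [lPhi, lev_toLaurent, Polynomial.eval₂_eq_eval_map, Polynomial.map_cyclotomic]
      exact hprim.isRoot_cyclotomic hn
    obtain ⟨c, hc⟩ := hdvd
    have hz : lev u (lpoch x d k) = 0 := by rw [hc, map_mul, h0, zero_mul]
    rw [lpoch, map_prod] at hz
    obtain ⟨i, hi, hzero⟩ := Finset.prod_eq_zero_iff.mp hz
    rw [map_sub, map_one, lev_T] at hzero
    have h1 : (u : ℂ) ^ (x + d * i) = 1 := by linear_combination -hzero
    exact ⟨i, Finset.mem_range.mp hi, (hprim.zpow_eq_one_iff_dvd _).mp h1⟩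
  · rintro ⟨i, hik, hdvd⟩
    exact (lPhi_dvd_one_sub_T_s9 hdvd).trans
      (Finset.dvd_prod_of_mem _ (Finset.mem_range.mpr hik))

set_option maxHeartbeats 1600000 in
theorem stmt9 (r : ℤ) (hr : r = 1 ∨ r = -1) (n d : ℕ) (hn : 1 < n) (hd : 3 ≤ d)
    (hmod : (n : ℤ) ≡ -r [ZMOD (d : ℤ)])
    (f : ℤ → ℕ)
    (hf : ∀ x : ℤ, lPhi n ∣ lpoch x d (f x) ∧ ∀ k < f x, ¬ lPhi n ∣ lpoch x d k) :
    (f ((d : ℤ) - r) : ℤ) = ((n : ℤ) + r) / d ∧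
    (f r : ℤ) = ((d : ℤ) * (n + 1) - (n + r)) / d ∧
    f (d : ℤ) = n ∧
    (f (2 * r) : ℤ) = ((d : ℤ) * (n + 1) - 2 * (n + r)) / d ∧
    f r ≤ f (d : ℤ) ∧
    ((d : ℤ) * n - n - r) / d < (f r : ℤ) ∧
    (f (2 * r) : ℤ) ≤ ((d : ℤ) * n - n - r) / d ∧
    f ((d : ℤ) - r) ≤ f (2 * r) := by
  have hd0 : (0:ℤ) < d := by exact_mod_cast (by omega : 0 < d)
  have hd3 : (3:ℤ) ≤ d := by exact_mod_cast hd
  have hn0 : 0 < n := by omega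
  have hn2 : (2:ℤ) ≤ n := by exact_mod_cast hn
  have hr2 : r * r = 1 := by rcases hr with rfl | rfl <;> norm_num
  have hrl : -1 ≤ r := by rcases hr with rfl | rfl <;> norm_num
  have hru : r ≤ 1 := by rcases hr with rfl | rfl <;> norm_num
  obtain ⟨s, hs⟩ : (d:ℤ) ∣ (n:ℤ) + r := by
    have h := hmod.dvd
    rw [show -r - (n:ℤ) = -((n:ℤ) + r) by ring] at h
    exact dvd_neg.mp h
  have hs1 : 1 ≤ s := by
    by_contra hcon
    push_neg at hcon
    have h1 : (d:ℤ) * s ≤ (d:ℤ) * 0 := mul_le_mul_of_nonneg_left (by omega) hd0.le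
    rw [mul_zero] at h1
    linarith
  have h3s : 3 * s ≤ (n:ℤ) + 1 := by
    nlinarith [mul_nonneg (show (0:ℤ) ≤ (d:ℤ) - 3 by linarith) (show (0:ℤ) ≤ s by omega)]
  have h2s : 2 * s ≤ (n:ℤ) := by linarith
  obtain ⟨t, ht⟩ : ∃ t : ℕ, (t:ℤ) = s := ⟨s.toNat, Int.toNat_of_nonneg (by omega)⟩
  have ht1 : 1 ≤ t := by omega
  have htn : 2 * t ≤ n := by omega
  have hcop : IsCoprime (n:ℤ) (d:ℤ) := ⟨-r, r*s, by linear_combination (-r) * hs + hr2⟩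
  have key := fun (x : ℤ) (k : ℕ) => lPhi_dvd_lpoch_iff n hn0 x d k
  have fspec : ∀ (x : ℤ) (m : ℕ), (∃ i : ℕ, i < m ∧ (n:ℤ) ∣ x + d * i) →
      (∀ i : ℕ, i + 1 < m → ¬ (n:ℤ) ∣ x + d * i) → f x = m := by
    intro x m hex hnot
    have h1 : lPhi n ∣ lpoch x d m := (key x m).mpr (by
      obtain ⟨i, h, h'⟩ := hex; exact ⟨i, h, h'⟩)
    have h2 : ∀ k < m, ¬ lPhi n ∣ lpoch x d k := by
      intro k hk hdd
      obtain ⟨i, hik, hd'⟩ := (key x k).mp hdd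
      exact hnot i (by omega) hd'
    by_contra hne
    rcases Nat.lt_or_ge (f x) m with h | h
    · exact h2 (f x) h (hf x).1
    · exact (hf x).2 m (by omega) h1
  -- Case A : x = d - r
  have hA : f ((d:ℤ) - r) = t := by
    apply fspec
    · refine ⟨t - 1, by omega, ⟨1, ?_⟩⟩
      have hc : ((t - 1 : ℕ) : ℤ) = s - 1 := by omega
      rw [hc]; linear_combination -hs
    · intro i hi hdvd
      have hiz : (i:ℤ) ≤ s - 2 := by omega
      have hi0 : (0:ℤ) ≤ i := Int.natCast_nonneg i
      have hdi : (0:ℤ) ≤ (d:ℤ) * i := mul_nonneg hd0.le hi0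
      have hv1 : 0 < (d:ℤ) - r + d * i := by linarith
      have hv2 : (d:ℤ) - r + d * i ≤ (n:ℤ) - d := by
        nlinarith [mul_le_mul_of_nonneg_left hiz hd0.le]
      have := Int.le_of_dvd hv1 hdvd
      linarith
  -- Case B : x = d
  have hB : f (d:ℤ) = n := by
    apply fspec
    · refine ⟨n - 1, by omega, ⟨d, ?_⟩⟩
      have hc : ((n - 1 : ℕ) : ℤ) = (n:ℤ) - 1 := by omega
      rw [hc]; ring
    · intro i hi hdvd
      rw [show (d:ℤ) + d * i = d * ((i:ℤ) + 1) by ring] at hdvd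
      have h2 : (n:ℤ) ∣ ((i:ℤ) + 1) := hcop.dvd_of_dvd_mul_left hdvd
      have := Int.le_of_dvd (by omega) h2
      omega
  -- Case C : x = r
  have hC : f r = n + 1 - t := by
    apply fspec
    · refine ⟨n - t, by omega, ⟨(d:ℤ) - 1, ?_⟩⟩
      have hc : ((n - t : ℕ) : ℤ) = (n:ℤ) - s := by omega
      rw [hc]; linear_combination hs
    · intro i hi hdvd
      have hiz : (i:ℤ) ≤ (n:ℤ) - s - 1 := by omega
      obtain ⟨j, hj⟩ := hdvd
      have hi0 : (0:ℤ) ≤ i := Int.natCast_nonneg i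
      have hdi : (0:ℤ) ≤ (d:ℤ) * i := mul_nonneg hd0.le hi0
      have hj1 : 1 ≤ j := by
        rcases lt_or_ge j 0 with h0 | h0
        · exfalso
          have h4 : (n:ℤ) * j ≤ -n := by nlinarith
          linarith [hj]
        · rcases eq_or_lt_of_le h0 with h00 | h01
          · exfalso
            rw [← h00, mul_zero] at hj
            rcases Nat.eq_zero_or_pos i with rfl | hip
            · have : r = 0 := by push_cast at hj; linarith
              rw [this] at hr2; norm_num at hr2
            · have : (d:ℤ) ≤ d * i :=
                le_mul_of_one_le_right hd0.le (by exact_mod_cast hip)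
              linarith
          · omega
      have hdj : (d:ℤ) ∣ r * (j + 1) := by
        have h1 : (d:ℤ) ∣ (n:ℤ) * j - r := ⟨i, by linarith⟩
        have h2 : (d:ℤ) ∣ ((n:ℤ) + r) * j := ⟨s * j, by rw [hs]; ring⟩
        have h3 := h2.sub h1
        rwa [show ((n:ℤ)+r)*j - ((n:ℤ)*j - r) = r * (j+1) by ring] at h3
      have hdj2 : (d:ℤ) ∣ j + 1 := by
        have h5 := hdj.mul_left r
        rwa [show r * (r * (j+1)) = (r*r) * (j+1) by ring, hr2, one_mul] at h5
      have hj2 : (d:ℤ) ≤ j + 1 := Int.le_of_dvd (by omega) hdj2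
      have hub : (n:ℤ) * j ≤ (n:ℤ) * (d-1) - d := by
        rw [← hj]
        nlinarith [mul_le_mul_of_nonneg_left hiz hd0.le]
      have hlb : (n:ℤ) * (d-1) ≤ n * j := by
        nlinarith [mul_nonneg (show (0:ℤ) ≤ (n:ℤ) by positivity)
          (show (0:ℤ) ≤ j - ((d:ℤ) - 1) by linarith)]
      linarith
  -- Case D : x = 2r
  have hD : f (2 * r) = n + 1 - 2 * t := by
    apply fspec
    · refine ⟨n - 2 * t, by omega, ⟨(d:ℤ) - 2, ?_⟩⟩
      have hc : ((n - 2 * t : ℕ) : ℤ) = (n:ℤ) - 2 * s := by omega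
      rw [hc]; linear_combination 2 * hs
    · intro i hi hdvd
      have hiz : (i:ℤ) ≤ (n:ℤ) - 2 * s - 1 := by omega
      obtain ⟨j, hj⟩ := hdvd
      have hi0 : (0:ℤ) ≤ i := Int.natCast_nonneg i
      have hdi : (0:ℤ) ≤ (d:ℤ) * i := mul_nonneg hd0.le hi0
      have hj1 : 1 ≤ j := by
        rcases lt_or_ge j 0 with h0 | h0
        · exfalso
          have h4 : (n:ℤ) * j ≤ -n := by nlinarith
          have h5 : -2 ≤ (n:ℤ) * j := by rw [← hj]; linarith
          have h6 : (n:ℤ) * j = -2 := le_antisymm (by linarith) h5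
          have h7 : (d:ℤ) * i = -2 - 2 * r := by linarith
          have h8 : r = -1 := by linarith
          have h9 : (d:ℤ) * s = 1 := by
            rw [← hs, h8]; linarith
          nlinarith [mul_le_mul_of_nonneg_left hs1 hd0.le]
        · rcases eq_or_lt_of_le h0 with h00 | h01
          · exfalso
            rw [← h00, mul_zero] at hj
            rcases Nat.eq_zero_or_pos i with rfl | hip
            · have : r = 0 := by push_cast at hj; linarith
              rw [this] at hr2; norm_num at hr2
            · have : (d:ℤ) ≤ d * i :=
                le_mul_of_one_le_right hd0.le (by exact_mod_cast hip)
              linarith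
          · omega
      have hdj : (d:ℤ) ∣ r * (j + 2) := by
        have h1 : (d:ℤ) ∣ (n:ℤ) * j - 2 * r := ⟨i, by linarith⟩
        have h2 : (d:ℤ) ∣ ((n:ℤ) + r) * j := ⟨s * j, by rw [hs]; ring⟩
        have h3 := h2.sub h1
        rwa [show ((n:ℤ)+r)*j - ((n:ℤ)*j - 2*r) = r * (j+2) by ring] at h3
      have hdj2 : (d:ℤ) ∣ j + 2 := by
        have h5 := hdj.mul_left r
        rwa [show r * (r * (j+2)) = (r*r) * (j+2) by ring, hr2, one_mul] at h5
      have hj2 : (d:ℤ) ≤ j + 2 := Int.le_of_dvd (by omega) hdj2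
      have hub : (n:ℤ) * j ≤ (n:ℤ) * (d-2) - d := by
        rw [← hj]
        nlinarith [mul_le_mul_of_nonneg_left hiz hd0.le]
      have hlb : (n:ℤ) * (d-2) ≤ n * j := by
        nlinarith [mul_nonneg (show (0:ℤ) ≤ (n:ℤ) by positivity)
          (show (0:ℤ) ≤ j - ((d:ℤ) - 2) by linarith)]
      linarith
  -- Division computations
  have hdne : (d:ℤ) ≠ 0 := hd0.ne'
  have hdiv1 : ((n:ℤ) + r) / d = s := by
    rw [hs]; exact Int.mul_ediv_cancel_left _ hdne
  have hdiv2 : ((d:ℤ) * (n + 1) - (n + r)) / d = (n:ℤ) + 1 - s := by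
    rw [hs, show (d:ℤ)*((n:ℤ)+1) - d*s = d*((n:ℤ)+1-s) by ring]
    exact Int.mul_ediv_cancel_left _ hdne
  have hdiv3 : ((d:ℤ) * (n + 1) - 2 * (n + r)) / d = (n:ℤ) + 1 - 2*s := by
    rw [hs, show (d:ℤ)*((n:ℤ)+1) - 2*(d*s) = d*((n:ℤ)+1-2*s) by ring]
    exact Int.mul_ediv_cancel_left _ hdne
  have hdiv4 : ((d:ℤ) * n - n - r) / d = (n:ℤ) - s := by
    rw [show (d:ℤ)*n - n - r = d*((n:ℤ)-s) by linear_combination -hs]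
    exact Int.mul_ediv_cancel_left _ hdne
  refine ⟨?_, ?_, hB, ?_, ?_, ?_, ?_, ?_⟩
  · rw [hA, hdiv1, ht]
  · rw [hC, hdiv2]; omega
  · rw [hD, hdiv3]; omega
  · rw [hC, hB]; omega
  · rw [hdiv4, hC]; omega
  · rw [hD, hdiv4]; omega
  · rw [hA, hD]; omega

end
end
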